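/- For graphs G and H of order at least two, two vertices (g,h) and (g',h') of the modular product G ⋄ H are distinct adjacent twins if and only if either (i) N_G[g] = N_G[g'] and N_H[h] = N_H[h'] with (g,h) ≠ (g',h'), or (ii) {g,g'} is a γ_G-pair and {h,h'} is a γ_H-pair. -/

import Mathlib

open SimpleGraph

variable {V : Type*} {W : Type*}

/-- `x` lies on some `y`–`z` geodesic in `G`. -/
def LiesOnGeodesic (G : SimpleGraph V) (x y z : V) : Prop :=
  G.dist y x + G.dist x z = G.dist y z

/-- A strong resolving set of `G`. -/
def IsStrongResolvingSet (G : SimpleGraph V) (S : Set V) : Prop :=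
  ∀ x y : V, x ≠ y → ∃ z ∈ S,
    LiesOnGeodesic G x y z ∨ LiesOnGeodesic G y x z

/-- The strong metric dimension of a finite graph. -/
noncomputable def sdim (G : SimpleGraph V) [Fintype V] : ℕ :=
  sInf {n : ℕ | ∃ S : Finset V, S.card = n ∧ IsStrongResolvingSet G ↑S}

/-- `u` is maximally distant from `v` in `G`. -/
def MaxDistFrom (G : SimpleGraph V) (u v : V) : Prop :=
  ∀ w : V, G.Adj u w → G.dist w v ≤ G.dist u v

/-- `u` and `v` are mutually maximally distant in `G`. -/
def MutMaxDist (G : SimpleGraph V) (u v : V) : Prop :=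
  MaxDistFrom G u v ∧ MaxDistFrom G v u

/-- The strong resolving graph of `G` (on the full vertex set; vertices not in
any MMD pair are isolated). -/
def srGraph (G : SimpleGraph V) : SimpleGraph V where
  Adj u v := u ≠ v ∧ MutMaxDist G u v
  symm := by
    constructor
    rintro u v ⟨h, h1, h2⟩
    exact ⟨h.symm, h2, h1⟩
  loopless := by constructor; rintro v ⟨h, -⟩; exact h rfl

/-- The direct (tensor) product of two graphs. -/
def directProd (G : SimpleGraph V) (H : SimpleGraph W) : SimpleGraph (V × W) where
  Adj x y := G.Adj x.1 y.1 ∧ H.Adj x.2 y.2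
  symm := by constructor; rintro x y ⟨h1, h2⟩; exact ⟨h1.symm, h2.symm⟩
  loopless := by constructor; rintro x ⟨h1, -⟩; exact G.loopless.irrefl _ h1

/-- The modular product of two graphs:
`E(G ⋄ H) = E(G □ H) ∪ E(G × H) ∪ E(Ḡ × H̄)`. -/
def modProd (G : SimpleGraph V) (H : SimpleGraph W) : SimpleGraph (V × W) :=
  (G □ H) ⊔ directProd G H ⊔ directProd Gᶜ Hᶜ

/-- The closed neighborhood of a vertex. -/
def closedNbr (G : SimpleGraph V) (v : V) : Set V :=
  insert v (G.neighborSet v)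

/-- `{u, w}` is a `γ`-pair of `G`: their closed neighborhoods are disjoint and
cover all of `G`. -/
def GammaPair (G : SimpleGraph V) (u w : V) : Prop :=
  closedNbr G u ∩ closedNbr G w = ∅ ∧ closedNbr G u ∪ closedNbr G w = Set.univ

lemma mem_closedNbr {G : SimpleGraph V} {v a : V} :
    a ∈ closedNbr G v ↔ a = v ∨ G.Adj v a := by
  simp [closedNbr, adj_comm]

lemma self_mem_closedNbr {G : SimpleGraph V} {v : V} : v ∈ closedNbr G v :=
  mem_closedNbr.mpr (Or.inl rfl)

lemma modProd_adj' {G : SimpleGraph V} {H : SimpleGraph W} {x y : V × W} :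
    (modProd G H).Adj x y ↔
      ((G.Adj x.1 y.1 ∧ x.2 = y.2) ∨ (H.Adj x.2 y.2 ∧ x.1 = y.1)) ∨
      (G.Adj x.1 y.1 ∧ H.Adj x.2 y.2) ∨
      ((x.1 ≠ y.1 ∧ ¬G.Adj x.1 y.1) ∧ (x.2 ≠ y.2 ∧ ¬H.Adj x.2 y.2)) := by
  simp only [modProd, SimpleGraph.sup_adj, SimpleGraph.boxProd_adj, directProd,
    SimpleGraph.compl_adj]
  tauto

lemma mem_closedNbr_modProd {G : SimpleGraph V} {H : SimpleGraph W}
    {g a : V} {h b : W} :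
    (a, b) ∈ closedNbr (modProd G H) (g, h) ↔
      (a ∈ closedNbr G g ↔ b ∈ closedNbr H h) := by
  rw [mem_closedNbr, mem_closedNbr, mem_closedNbr, modProd_adj', Prod.mk.injEq]
  have h1 : ¬ G.Adj g g := G.loopless.irrefl g
  have h2 : ¬ H.Adj h h := H.loopless.irrefl h
  constructor
  · rintro (⟨ha, hb⟩ | (⟨hg, hb⟩ | ⟨hh, ha⟩) | ⟨hg, hh⟩ | ⟨⟨ha, hg⟩, ⟨hb, hh⟩⟩) <;>
      subst_vars <;> tauto
  · intro hiff
    by_cases ha : a = g <;> by_cases hb : b = h <;> subst_vars <;> tauto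

lemma set_dichotomy [Nonempty V] [Nonempty W] {A A' : Set V} {B B' : Set W}
    (hm : ∀ a b, ((a ∈ A ↔ b ∈ B) ↔ (a ∈ A' ↔ b ∈ B'))) :
    (A = A' ∧ B = B') ∨ (A = A'ᶜ ∧ B = B'ᶜ) := by
  have h2 : ∀ (a : V) (b : W), ((a ∈ A ↔ a ∈ A') ↔ (b ∈ B ↔ b ∈ B')) := by
    intro a b
    have := hm a b
    tauto
  obtain ⟨b0⟩ := ‹Nonempty W›
  obtain ⟨a0⟩ := ‹Nonempty V›
  by_cases hb : b0 ∈ B ↔ b0 ∈ B'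
  · left
    constructor
    · ext a; exact (h2 a b0).mpr hb
    · ext b
      have ha0 : a0 ∈ A ↔ a0 ∈ A' := (h2 a0 b0).mpr hb
      exact (h2 a0 b).mp ha0
  · right
    constructor
    · ext a
      have := (h2 a b0)
      simp only [Set.mem_compl_iff]
      tauto
    · ext b
      have ha0 : ¬(a0 ∈ A ↔ a0 ∈ A') := fun hc => hb ((h2 a0 b0).mp hc)
      have := h2 a0 b
      simp only [Set.mem_compl_iff]
      tauto

lemma gammaPair_compl {G : SimpleGraph V} {u w : V}
    (h : closedNbr G u = (closedNbr G w)ᶜ) : GammaPair G u w := by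
  constructor
  · rw [h, Set.compl_inter_self]
  · rw [h, Set.compl_union_self]

lemma gammaPair_mem_compl {G : SimpleGraph V} {u w : V} (h : GammaPair G u w) :
    ∀ a, a ∈ closedNbr G u ↔ a ∉ closedNbr G w := by
  obtain ⟨hi, hu⟩ := h
  intro a
  have h1 : ¬(a ∈ closedNbr G u ∩ closedNbr G w) := by rw [hi]; exact id
  have h2 : a ∈ closedNbr G u ∪ closedNbr G w := by rw [hu]; trivial
  simp only [Set.mem_inter_iff, Set.mem_union] at h1 h2
  constructor
  · intro hu hw; exact h1 ⟨hu, hw⟩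
  · intro hw; rcases h2 with h | h
    · exact h
    · exact absurd h hw

theorem modProd_adjacent_twins_iff [Fintype V] [Fintype W]
    (G : SimpleGraph V) (H : SimpleGraph W)
    (hV : 2 ≤ Fintype.card V) (hW : 2 ≤ Fintype.card W) :
    ∀ (g g' : V) (h h' : W),
      ((modProd G H).Adj (g, h) (g', h') ∧
        closedNbr (modProd G H) (g, h) = closedNbr (modProd G H) (g', h')) ↔
      ((closedNbr G g = closedNbr G g' ∧ closedNbr H h = closedNbr H h' ∧
          (g, h) ≠ (g', h')) ∨
        (GammaPair G g g' ∧ GammaPair H h h')) := by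
  haveI : Nonempty V := Fintype.card_pos_iff.mp (by omega)
  haveI : Nonempty W := Fintype.card_pos_iff.mp (by omega)
  intro g g' h h'
  constructor
  · rintro ⟨hadj, heq⟩
    have hne : (g, h) ≠ (g', h') := hadj.ne
    have hm : ∀ (a : V) (b : W),
        ((a ∈ closedNbr G g ↔ b ∈ closedNbr H h) ↔
          (a ∈ closedNbr G g' ↔ b ∈ closedNbr H h')) := by
      intro a b
      rw [← mem_closedNbr_modProd, ← mem_closedNbr_modProd, heq]
    rcases set_dichotomy hm with ⟨hA, hB⟩ | ⟨hA, hB⟩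
    · exact Or.inl ⟨hA, hB, hne⟩
    · exact Or.inr ⟨gammaPair_compl hA, gammaPair_compl hB⟩
  · rintro (⟨hA, hB, hne⟩ | ⟨hGγ, hHγ⟩)
    · have hmem : (g', h') ∈ closedNbr (modProd G H) (g, h) := by
        rw [mem_closedNbr_modProd]
        have h1 : g' ∈ closedNbr G g := hA ▸ self_mem_closedNbr
        have h2 : h' ∈ closedNbr H h := hB ▸ self_mem_closedNbr
        exact iff_of_true h1 h2
      rcases mem_closedNbr.mp hmem with heq' | hadj
      · exact absurd heq'.symm hne
      · refine ⟨hadj, ?_⟩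
        ext ⟨a, b⟩
        rw [mem_closedNbr_modProd, mem_closedNbr_modProd, hA, hB]
    · have hGc := gammaPair_mem_compl hGγ
      have hHc := gammaPair_mem_compl hHγ
      have hg : g ≠ g' := by
        intro hc
        exact (hGc g).mp self_mem_closedNbr (hc ▸ self_mem_closedNbr)
      have hmem : (g', h') ∈ closedNbr (modProd G H) (g, h) := by
        rw [mem_closedNbr_modProd]
        have h1 : g' ∉ closedNbr G g := fun hc => (hGc g').mp hc self_mem_closedNbr
        have h2 : h' ∉ closedNbr H h := fun hc => (hHc h').mp hc self_mem_closedNbr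
        exact iff_of_false h1 h2
      rcases mem_closedNbr.mp hmem with heq' | hadj
      · exact absurd (congrArg Prod.fst heq') hg.symm
      · refine ⟨hadj, ?_⟩
        ext ⟨a, b⟩
        rw [mem_closedNbr_modProd, mem_closedNbr_modProd, hGc a, hHc b]
        exact not_iff_not
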